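/- Under Conditions (C1)–(C6), for all fixed u, v ∈ (0,1), the covariance under the permutation null distribution of Z_diff^π(⌊n·u⌋) and Z_diff^π(⌊n·v⌋) converges, as n → ∞, to ρ_diff*(u,v) = (u∧v)(1−(u∨v))/√((u∧v)(1−(u∧v))·(u∨v)(1−(u∨v))). -/

import Mathlib

open Finset Filter Asymptotics MeasureTheory ProbabilityTheory Topology

namespace RING

/-- `U1^π(t1,t2)`: sum of `R (π i) (π j)` over indices (1-based `i,j ∈ {1,…,n}`,
represented by `Fin n` with `i` standing for index `i+1`) with `t1 < i ≤ t2` and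
`t1 < j ≤ t2`. -/
noncomputable def U1 (n : ℕ) (R : Fin n → Fin n → ℝ) (π : Equiv.Perm (Fin n))
    (t1 t2 : ℕ) : ℝ :=
  ∑ i : Fin n, ∑ j : Fin n,
    if t1 ≤ (i : ℕ) ∧ (i : ℕ) < t2 ∧ t1 ≤ (j : ℕ) ∧ (j : ℕ) < t2 then R (π i) (π j) else 0

/-- `U2^π(t1,t2)`: sum of `R (π i) (π j)` over indices with `i ≤ t1` or `i > t2`,
and `j ≤ t1` or `j > t2`. -/
noncomputable def U2 (n : ℕ) (R : Fin n → Fin n → ℝ) (π : Equiv.Perm (Fin n))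
    (t1 t2 : ℕ) : ℝ :=
  ∑ i : Fin n, ∑ j : Fin n,
    if ((i : ℕ) < t1 ∨ t2 ≤ (i : ℕ)) ∧ ((j : ℕ) < t1 ∨ t2 ≤ (j : ℕ)) then R (π i) (π j) else 0

/-- Expectation under the permutation null distribution (uniform over all `n!`
permutations). -/
noncomputable def pexp (n : ℕ) (f : Equiv.Perm (Fin n) → ℝ) : ℝ :=
  (∑ π : Equiv.Perm (Fin n), f π) / (Nat.factorial n)

/-- Variance under the permutation null distribution. -/
noncomputable def pvar (n : ℕ) (f : Equiv.Perm (Fin n) → ℝ) : ℝ :=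
  pexp n (fun π => (f π - pexp n f) ^ 2)

/-- Covariance under the permutation null distribution. -/
noncomputable def pcov (n : ℕ) (f g : Equiv.Perm (Fin n) → ℝ) : ℝ :=
  pexp n (fun π => (f π - pexp n f) * (g π - pexp n g))

/-- `R̄_{i·} = (Σ_j R_{ij})/(n-1)`. -/
noncomputable def Rbar (n : ℕ) (R : Fin n → Fin n → ℝ) (i : Fin n) : ℝ :=
  (∑ j : Fin n, R i j) / ((n : ℝ) - 1)

/-- `r0 = (1/n) Σ_i R̄_{i·}`. -/
noncomputable def r0 (n : ℕ) (R : Fin n → Fin n → ℝ) : ℝ :=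
  (∑ i : Fin n, Rbar n R i) / n

/-- `r1² = (1/n) Σ_i R̄_{i·}²`. -/
noncomputable def r1sq (n : ℕ) (R : Fin n → Fin n → ℝ) : ℝ :=
  (∑ i : Fin n, (Rbar n R i) ^ 2) / n

/-- `r_d² = (1/(n(n-1))) Σ_i Σ_j R_{ij}²`. -/
noncomputable def rdsq (n : ℕ) (R : Fin n → Fin n → ℝ) : ℝ :=
  (∑ i : Fin n, ∑ j : Fin n, (R i j) ^ 2) / ((n : ℝ) * ((n : ℝ) - 1))

/-- `U_diff^π = U1^π − U2^π`. -/
noncomputable def Udiff (n : ℕ) (R : Fin n → Fin n → ℝ) (π : Equiv.Perm (Fin n))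
    (t1 t2 : ℕ) : ℝ :=
  U1 n R π t1 t2 - U2 n R π t1 t2

/-- `U_w^π = ((n−t2+t1−1)·U1^π + (t2−t1−1)·U2^π)/(n−2)`. -/
noncomputable def Uw (n : ℕ) (R : Fin n → Fin n → ℝ) (π : Equiv.Perm (Fin n))
    (t1 t2 : ℕ) : ℝ :=
  (((n : ℝ) - t2 + t1 - 1) * U1 n R π t1 t2 + ((t2 : ℝ) - t1 - 1) * U2 n R π t1 t2) /
    ((n : ℝ) - 2)

/-- Standardized `Z_w^π(t1,t2)`. -/
noncomputable def Zw (n : ℕ) (R : Fin n → Fin n → ℝ) (π : Equiv.Perm (Fin n))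
    (t1 t2 : ℕ) : ℝ :=
  (Uw n R π t1 t2 - pexp n (fun σ => Uw n R σ t1 t2)) /
    Real.sqrt (pvar n (fun σ => Uw n R σ t1 t2))

/-- Standardized `Z_diff^π(t1,t2)`. -/
noncomputable def Zdiff (n : ℕ) (R : Fin n → Fin n → ℝ) (π : Equiv.Perm (Fin n))
    (t1 t2 : ℕ) : ℝ :=
  (Udiff n R π t1 t2 - pexp n (fun σ => Udiff n R σ t1 t2)) /
    Real.sqrt (pvar n (fun σ => Udiff n R σ t1 t2))

/-- Discrete σ-algebra on the finite permutation group. -/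
instance (n : ℕ) : MeasurableSpace (Equiv.Perm (Fin n)) := ⊤

/-- The permutation null distribution: the uniform probability measure on the
`n!` permutations of `{1,…,n}`. -/
noncomputable def permP (n : ℕ) : ProbabilityMeasure (Equiv.Perm (Fin n)) :=
  ⟨(PMF.uniformOfFintype (Equiv.Perm (Fin n))).toMeasure,
    PMF.toMeasure.isProbabilityMeasure _⟩

/-- The distribution of a real-valued statistic under the permutation null
distribution. -/
noncomputable def permDist (n : ℕ) (f : Equiv.Perm (Fin n) → ℝ) : ProbabilityMeasure ℝ :=
  (permP n).map (f := f) (Measurable.aemeasurable (fun _ _ => trivial))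

/-- The centered Gaussian distribution on `ℝ` with variance `v` (for `v ≥ 0`). -/
noncomputable def gaussLimit (v : ℝ) : ProbabilityMeasure ℝ :=
  ⟨gaussianReal 0 (Real.toNNReal v), inferInstance⟩

/-- `ρ_w*(u,v) = (u∧v)(1−(u∨v))/((u∨v)(1−(u∧v)))`. -/
noncomputable def rhoW (u v : ℝ) : ℝ :=
  (min u v * (1 - max u v)) / (max u v * (1 - min u v))

/-- `ρ_diff*(u,v) = (u∧v)(1−(u∨v))/√((u∧v)(1−(u∧v))·(u∨v)(1−(u∨v)))`. -/
noncomputable def rhoDiff (u v : ℝ) : ℝ :=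
  (min u v * (1 - max u v)) /
    Real.sqrt (min u v * (1 - min u v) * (max u v * (1 - max u v)))

/-- Condition (C1): `Σ_i (Σ_j R_{ij}²)² = O(n³ r_d⁴)`. -/
def Cond1 (R : (n : ℕ) → Fin n → Fin n → ℝ) : Prop :=
  (fun n => ∑ i : Fin n, (∑ j : Fin n, (R n i j) ^ 2) ^ 2)
    =O[atTop] fun n => (n : ℝ) ^ 3 * (rdsq n (R n)) ^ 2

/-- Condition (C2): `Σ_i |R̄_{i·} − r0|³ = o((n(r1² − r0²))^{3/2})`. -/
def Cond2 (R : (n : ℕ) → Fin n → Fin n → ℝ) : Prop :=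
  (fun n => ∑ i : Fin n, |Rbar n (R n) i - r0 n (R n)| ^ 3)
    =o[atTop] fun n => ((n : ℝ) * (r1sq n (R n) - (r0 n (R n)) ^ 2)) ^ ((3 : ℝ) / 2)

/-- Condition (C3): `Σ_i (R̄_{i·} − r0)³ = o(n·r_d·(r1² − r0²))`. -/
def Cond3 (R : (n : ℕ) → Fin n → Fin n → ℝ) : Prop :=
  (fun n => ∑ i : Fin n, (Rbar n (R n) i - r0 n (R n)) ^ 3)
    =o[atTop] fun n =>
      (n : ℝ) * Real.sqrt (rdsq n (R n)) * (r1sq n (R n) - (r0 n (R n)) ^ 2)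

/-- Condition (C4): `|Σ_{i≠j≠k} R_{ji} R_{ik} (R̄_{j·} − r0)(R̄_{k·} − r0)| =
o(n³ r_d² (r1² − r0²))`. -/
def Cond4 (R : (n : ℕ) → Fin n → Fin n → ℝ) : Prop :=
  (fun n =>
      |∑ i : Fin n, ∑ j : Fin n, ∑ k : Fin n,
        if i ≠ j ∧ i ≠ k ∧ j ≠ k then
          R n j i * R n i k * (Rbar n (R n) j - r0 n (R n)) * (Rbar n (R n) k - r0 n (R n))
        else 0|)
    =o[atTop] fun n => (n : ℝ) ^ 3 * rdsq n (R n) * (r1sq n (R n) - (r0 n (R n)) ^ 2)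

/-- Condition (C5): `Σ_i Σ_j Σ_{k∉{i,j}} Σ_{l∉{i,j}} R_{ij} R_{kl}
(R_{ik} R_{jl} + R_{il} R_{jk}) = o(n⁴ r_d⁴)`. -/
def Cond5 (R : (n : ℕ) → Fin n → Fin n → ℝ) : Prop :=
  (fun n =>
      ∑ i : Fin n, ∑ j : Fin n, ∑ k : Fin n, ∑ l : Fin n,
        if k ≠ i ∧ k ≠ j ∧ l ≠ i ∧ l ≠ j then
          R n i j * R n k l * (R n i k * R n j l + R n i l * R n j k)
        else 0)
    =o[atTop] fun n => (n : ℝ) ^ 4 * (rdsq n (R n)) ^ 2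

/-- Condition (C6): `r1 = o(r_d)`. -/
def Cond6 (R : (n : ℕ) → Fin n → Fin n → ℝ) : Prop :=
  (fun n => Real.sqrt (r1sq n (R n))) =o[atTop] fun n => Real.sqrt (rdsq n (R n))

end RING

open RING

section Aux
variable {n : ℕ}

lemma factR_ne : ((Nat.factorial n : ℝ)) ≠ 0 := by
  exact_mod_cast (Nat.factorial_pos n).ne'

lemma card_perm_fin : (Finset.univ : Finset (Equiv.Perm (Fin n))).card = Nat.factorial n := by
  simp [Finset.card_univ, Fintype.card_perm, Fintype.card_fin]

lemma pexp_affine (a c : ℝ) (h : Equiv.Perm (Fin n) → ℝ) :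
    pexp n (fun π => a * h π - c) = a * pexp n h - c := by
  have hfact : ((Nat.factorial n : ℝ)) ≠ 0 := factR_ne
  simp only [pexp, Finset.sum_sub_distrib, ← Finset.mul_sum, Finset.sum_const, card_perm_fin,
    nsmul_eq_mul]
  field_simp
  try ring

lemma pexp_prod_affine (a c : ℝ) (h k : Equiv.Perm (Fin n) → ℝ) :
    pexp n (fun π => (a * h π - c) * (a * k π - c))
      = a ^ 2 * pexp n (fun π => h π * k π) - a * c * pexp n h - a * c * pexp n k + c ^ 2 := by
  have hfact : ((Nat.factorial n : ℝ)) ≠ 0 := factR_ne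
  have expand : ∀ π : Equiv.Perm (Fin n), (a * h π - c) * (a * k π - c)
      = a ^ 2 * (h π * k π) - a * c * h π - a * c * k π + c ^ 2 := fun π => by ring
  simp only [pexp]
  rw [Finset.sum_congr rfl fun π _ => expand π]
  simp only [Finset.sum_add_distrib, Finset.sum_sub_distrib, ← Finset.mul_sum, Finset.sum_const,
    card_perm_fin, nsmul_eq_mul]
  field_simp

lemma sum_center_zero (f : Equiv.Perm (Fin n) → ℝ) :
    ∑ π : Equiv.Perm (Fin n), (f π - pexp n f) = 0 := by
  rw [Finset.sum_sub_distrib, Finset.sum_const, card_perm_fin, nsmul_eq_mul, pexp]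
  field_simp
  ring

lemma pexp_div (f : Equiv.Perm (Fin n) → ℝ) (a : ℝ) :
    pexp n (fun π => f π / a) = pexp n f / a := by
  simp only [pexp, ← Finset.sum_div]
  rw [div_right_comm]

lemma pcov_eq (f g : Equiv.Perm (Fin n) → ℝ) :
    pcov n f g = pexp n (fun π => f π * g π) - pexp n f * pexp n g := by
  have expand : ∀ π : Equiv.Perm (Fin n), (f π - pexp n f) * (g π - pexp n g)
      = f π * g π - pexp n f * g π - pexp n g * f π + pexp n f * pexp n g := fun π => by ring
  have h : ((Nat.factorial n : ℝ)) ≠ 0 := factR_ne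
  rw [pcov, pexp, Finset.sum_congr rfl fun π _ => expand π]
  simp only [Finset.sum_add_distrib, Finset.sum_sub_distrib, ← Finset.mul_sum,
    Finset.sum_const, card_perm_fin, nsmul_eq_mul]
  rw [pexp, pexp, pexp]
  field_simp
  ring

lemma pvar_eq_pcov (f : Equiv.Perm (Fin n) → ℝ) : pvar n f = pcov n f f := by
  unfold pvar pcov; congr 1; funext π; ring

lemma pcov_comm (f g : Equiv.Perm (Fin n) → ℝ) : pcov n f g = pcov n g f := by
  unfold pcov; congr 1; funext π; ring

lemma pcov_standardize (f g : Equiv.Perm (Fin n) → ℝ) (a b : ℝ) :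
    pcov n (fun π => (f π - pexp n f) / a) (fun π => (g π - pexp n g) / b)
      = pcov n f g / (a * b) := by
  have hF : pexp n (fun π => (f π - pexp n f) / a) = 0 := by
    rw [pexp, ← Finset.sum_div, sum_center_zero, zero_div, zero_div]
  have hG : pexp n (fun π => (g π - pexp n g) / b) = 0 := by
    rw [pexp, ← Finset.sum_div, sum_center_zero, zero_div, zero_div]
  unfold pcov
  rw [hF, hG]
  have h : (fun π => ((f π - pexp n f) / a - 0) * ((g π - pexp n g) / b - 0))
      = fun π => ((f π - pexp n f) * (g π - pexp n g)) / (a * b) := by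
    funext π; rw [sub_zero, sub_zero, div_mul_div_comm]
  rw [h, pexp_div]

lemma sum_perm_comp_eq (f : Fin n → ℝ) (i j : Fin n) :
    ∑ π : Equiv.Perm (Fin n), f (π i) = ∑ π : Equiv.Perm (Fin n), f (π j) := by
  refine Fintype.sum_equiv (Equiv.mulRight (Equiv.swap i j)) _ _ (fun π => ?_)
  simp [Equiv.Perm.mul_apply, Equiv.swap_apply_right]

lemma sum_perm_single (f : Fin n → ℝ) (i : Fin n) :
    ∑ π : Equiv.Perm (Fin n), f (π i) = (Nat.factorial n : ℝ) * (∑ a, f a) / n := by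
  have hn : (n : ℝ) ≠ 0 := by
    have := i.pos
    positivity
  have key : (n : ℝ) * ∑ π : Equiv.Perm (Fin n), f (π i)
      = (Nat.factorial n : ℝ) * ∑ a, f a := by
    have h1 : ∑ j : Fin n, ∑ π : Equiv.Perm (Fin n), f (π j)
        = (n : ℝ) * ∑ π : Equiv.Perm (Fin n), f (π i) := by
      rw [Finset.sum_congr rfl fun j _ => sum_perm_comp_eq f j i]
      simp [Finset.sum_const, Fintype.card_fin, nsmul_eq_mul]
    rw [← h1, Finset.sum_comm]
    rw [Finset.sum_congr rfl fun π _ => Equiv.sum_comp π f]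
    simp [Finset.sum_const, Finset.card_univ, Fintype.card_perm, Fintype.card_fin, nsmul_eq_mul]
  field_simp
  linarith [key]

lemma sum_perm_pair_eq (g : Fin n → Fin n → ℝ) {i j i' j' : Fin n}
    (hij : i ≠ j) (hij' : i' ≠ j') :
    ∑ π : Equiv.Perm (Fin n), g (π i) (π j) = ∑ π : Equiv.Perm (Fin n), g (π i') (π j') := by
  set τ := Equiv.swap i i' with hτdef
  have hτj' : τ j' ≠ i := by
    intro h
    apply hij'
    apply τ.injective
    rw [h, hτdef, Equiv.swap_apply_right]
  set σ := τ.trans (Equiv.swap j (τ j')) with hσdef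
  have hσi : σ i' = i := by
    rw [hσdef, Equiv.trans_apply, hτdef, Equiv.swap_apply_right]
    exact Equiv.swap_apply_of_ne_of_ne hij (Ne.symm hτj')
  have hσj : σ j' = j := by
    rw [hσdef, Equiv.trans_apply, Equiv.swap_apply_right]
  refine Fintype.sum_equiv (Equiv.mulRight σ) _ _ (fun π => ?_)
  simp [Equiv.Perm.mul_apply, hσi, hσj]

lemma sum_perm_pair (g : Fin n → Fin n → ℝ) {i j : Fin n} (hij : i ≠ j) :
    ∑ π : Equiv.Perm (Fin n), g (π i) (π j)
      = (Nat.factorial n : ℝ) * (∑ a, ∑ b, if a ≠ b then g a b else 0)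
        / ((n : ℝ) * ((n : ℝ) - 1)) := by
  have hn2 : 2 ≤ n := by
    by_contra h
    push_neg at h
    interval_cases n
    · exact i.elim0
    · exact hij (Subsingleton.elim i j)
  have hn : (n : ℝ) ≠ 0 := by positivity
  have hn1 : (n : ℝ) - 1 ≠ 0 := by
    have : (2 : ℝ) ≤ n := by exact_mod_cast hn2
    intro h; linarith
  have key : (n : ℝ) * ((n : ℝ) - 1) * ∑ π : Equiv.Perm (Fin n), g (π i) (π j)
      = (Nat.factorial n : ℝ) * ∑ a, ∑ b, if a ≠ b then g a b else 0 := by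
    have h1 : ∑ i' : Fin n, ∑ j' : Fin n,
        (if i' ≠ j' then ∑ π : Equiv.Perm (Fin n), g (π i') (π j') else 0)
        = ∑ i' : Fin n, ∑ j' : Fin n,
          (if i' ≠ j' then ∑ π : Equiv.Perm (Fin n), g (π i) (π j) else 0) := by
      refine Finset.sum_congr rfl fun i' _ => Finset.sum_congr rfl fun j' _ => ?_
      by_cases h : i' ≠ j'
      · rw [if_pos h, if_pos h, sum_perm_pair_eq g h hij]
      · rw [if_neg h, if_neg h]
    have hcount : ∑ i' : Fin n, ∑ j' : Fin n,
        (if i' ≠ j' then (∑ π : Equiv.Perm (Fin n), g (π i) (π j)) else 0)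
        = ((n : ℝ) * (n : ℝ) - n) * ∑ π : Equiv.Perm (Fin n), g (π i) (π j) := by
      set C := ∑ π : Equiv.Perm (Fin n), g (π i) (π j) with hC
      have hpt : ∀ i' j' : Fin n, (if i' ≠ j' then C else 0) = C - (if i' = j' then C else 0) := by
        intro i' j'
        by_cases h : i' = j' <;> simp [h]
      simp only [hpt, Finset.sum_sub_distrib, Finset.sum_const, Finset.card_univ,
        Fintype.card_fin, nsmul_eq_mul, Finset.sum_ite_eq]
      simp [mul_sub, sub_mul]
      ring
    have h2 : ∑ i' : Fin n, ∑ j' : Fin n,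
        (if i' ≠ j' then ∑ π : Equiv.Perm (Fin n), g (π i') (π j') else 0)
        = (Nat.factorial n : ℝ) * ∑ a, ∑ b, if a ≠ b then g a b else 0 := by
      have swap1 : ∀ i' j' : Fin n, (if i' ≠ j' then ∑ π : Equiv.Perm (Fin n), g (π i') (π j') else 0)
          = ∑ π : Equiv.Perm (Fin n), (if i' ≠ j' then g (π i') (π j') else 0) := by
        intro i' j'
        by_cases h : i' ≠ j' <;> simp [h]
      simp only [swap1]
      have e1 : ∀ i' : Fin n,
          (∑ j' : Fin n, ∑ π : Equiv.Perm (Fin n), (if i' ≠ j' then g (π i') (π j') else 0))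
          = ∑ π : Equiv.Perm (Fin n), ∑ j' : Fin n, (if i' ≠ j' then g (π i') (π j') else 0) :=
        fun i' => Finset.sum_comm
      rw [Finset.sum_congr rfl fun i' _ => e1 i']
      have e2 : (∑ i' : Fin n, ∑ π : Equiv.Perm (Fin n), ∑ j' : Fin n,
            (if i' ≠ j' then g (π i') (π j') else 0))
          = ∑ π : Equiv.Perm (Fin n), ∑ i' : Fin n, ∑ j' : Fin n,
            (if i' ≠ j' then g (π i') (π j') else 0) := Finset.sum_comm
      rw [e2]
      have h3 : ∀ π : Equiv.Perm (Fin n),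
          ∑ i' : Fin n, ∑ j' : Fin n, (if i' ≠ j' then g (π i') (π j') else 0)
          = ∑ a, ∑ b, if a ≠ b then g a b else 0 := by
        intro π
        have hcond : ∀ i' j' : Fin n, (if i' ≠ j' then g (π i') (π j') else 0)
            = (fun a b => if a ≠ b then g a b else 0) (π i') (π j') := by
          intro i' j'
          simp only [ne_eq, EmbeddingLike.apply_eq_iff_eq]
        simp only [hcond]
        rw [Finset.sum_congr rfl fun i' _ =>
          Equiv.sum_comp π ((fun a b => if a ≠ b then g a b else 0) (π i'))]
        exact Equiv.sum_comp π (fun a => ∑ b, (fun a b => if a ≠ b then g a b else 0) a b)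
      rw [Finset.sum_congr rfl fun π _ => h3 π]
      simp [Finset.sum_const, Finset.card_univ, Fintype.card_perm, Fintype.card_fin, nsmul_eq_mul]
    rw [h2] at h1
    rw [hcount] at h1
    rw [h1]
    ring
  rw [eq_div_iff (by exact mul_ne_zero hn hn1)]
  linear_combination key

lemma sum_if_const {α : Type*} (s : Finset α) (c : Prop) [Decidable c] (h : α → ℝ) :
    ∑ x ∈ s, (if c then h x else 0) = if c then ∑ x ∈ s, h x else 0 := by
  split_ifs <;> simp

lemma count_lt {s : ℕ} (hs : s ≤ n) (c : ℝ) :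
    ∑ i : Fin n, (if (i : ℕ) < s then c else 0) = (s : ℝ) * c := by
  rw [Fin.sum_univ_eq_sum_range (fun k => if k < s then c else 0) n]
  rw [← Finset.sum_filter]
  have h : (Finset.range n).filter (fun k => k < s) = Finset.range s := by
    ext k; simp; omega
  rw [h]
  simp [Finset.sum_const, nsmul_eq_mul]

lemma udiff_eq (R : Fin n → Fin n → ℝ) (hsym : ∀ i j, R i j = R j i)
    (π : Equiv.Perm (Fin n)) (t : ℕ) :
    Udiff n R π 0 t
      = 2 * (∑ i : Fin n, if (i : ℕ) < t then (∑ b, R (π i) b) else 0)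
        - ∑ a, ∑ b, R a b := by
  unfold Udiff U1 U2
  rw [← Finset.sum_sub_distrib]
  simp only [← Finset.sum_sub_distrib]
  have h1 : ∀ i j : Fin n,
      ((if 0 ≤ (i : ℕ) ∧ (i : ℕ) < t ∧ 0 ≤ (j : ℕ) ∧ (j : ℕ) < t then R (π i) (π j) else 0)
        - (if ((i : ℕ) < 0 ∨ t ≤ (i : ℕ)) ∧ ((j : ℕ) < 0 ∨ t ≤ (j : ℕ)) then R (π i) (π j) else 0))
      = ((if (i : ℕ) < t then R (π i) (π j) else 0)
          + (if (j : ℕ) < t then R (π i) (π j) else 0)) - R (π i) (π j) := by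
    intro i j
    split_ifs <;> first | ring1 | (exfalso; omega)
  rw [Finset.sum_congr rfl fun i _ => Finset.sum_congr rfl fun j _ => h1 i j]
  simp only [Finset.sum_sub_distrib, Finset.sum_add_distrib]
  have hA : ∑ i : Fin n, ∑ j : Fin n, (if (i : ℕ) < t then R (π i) (π j) else 0)
      = ∑ i : Fin n, (if (i : ℕ) < t then (∑ b, R (π i) b) else 0) := by
    refine Finset.sum_congr rfl fun i _ => ?_
    rw [sum_if_const]
    split_ifs with h
    · exact Equiv.sum_comp π (R (π i))
    · rfl
  have hB : ∑ i : Fin n, ∑ j : Fin n, (if (j : ℕ) < t then R (π i) (π j) else 0)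
      = ∑ i : Fin n, (if (i : ℕ) < t then (∑ b, R (π i) b) else 0) := by
    rw [Finset.sum_comm]
    refine Finset.sum_congr rfl fun j _ => ?_
    rw [sum_if_const]
    split_ifs with h
    · rw [Equiv.sum_comp π (fun a => R a (π j))]
      rw [Finset.sum_congr rfl fun a _ => hsym a (π j)]
    · rfl
  have hC : ∑ i : Fin n, ∑ j : Fin n, R (π i) (π j) = ∑ a, ∑ b, R a b := by
    rw [Finset.sum_congr rfl fun i _ => Equiv.sum_comp π (R (π i))]
    exact Equiv.sum_comp π (fun a => ∑ b, R a b)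
  rw [hA, hB, hC]
  ring

lemma pexp_L (f : Fin n → ℝ) {r : ℕ} (hr : r ≤ n) (hn : 1 ≤ n) :
    pexp n (fun π => ∑ i : Fin n, if (i : ℕ) < r then f (π i) else 0)
      = (r : ℝ) * (∑ a, f a) / n := by
  have hn0 : (n : ℝ) ≠ 0 := by positivity
  have hfact : ((Nat.factorial n : ℝ)) ≠ 0 := factR_ne
  have hsum : ∑ π : Equiv.Perm (Fin n), ∑ i : Fin n, (if (i : ℕ) < r then f (π i) else 0)
      = (r : ℝ) * ((Nat.factorial n : ℝ) * (∑ a, f a) / n) := by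
    rw [Finset.sum_comm]
    have step : ∀ i : Fin n, (∑ π : Equiv.Perm (Fin n), if (i : ℕ) < r then f (π i) else 0)
        = if (i : ℕ) < r then (Nat.factorial n : ℝ) * (∑ a, f a) / n else 0 := by
      intro i
      rw [sum_if_const]
      split_ifs
      · exact sum_perm_single f i
      · rfl
    rw [Finset.sum_congr rfl fun i _ => step i]
    exact count_lt hr _
  rw [pexp, hsum]
  field_simp

lemma pexp_LL (hn : 2 ≤ n) (f : Fin n → ℝ) {s t : ℕ} (hst : s ≤ t) (htn : t ≤ n) :
    pexp n (fun π => (∑ i : Fin n, if (i : ℕ) < s then f (π i) else 0)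
        * (∑ j : Fin n, if (j : ℕ) < t then f (π j) else 0))
      = (s : ℝ) * (∑ a, (f a) ^ 2) / n
        + (s : ℝ) * ((t : ℝ) - 1) * ((∑ a, f a) ^ 2 - ∑ a, (f a) ^ 2)
          / ((n : ℝ) * ((n : ℝ) - 1)) := by
  have hn0 : (n : ℝ) ≠ 0 := by positivity
  have hn1 : (n : ℝ) - 1 ≠ 0 := by
    have : (2 : ℝ) ≤ n := by exact_mod_cast hn
    intro h; linarith
  have hfact : ((Nat.factorial n : ℝ)) ≠ 0 := factR_ne
  have hsn : s ≤ n := hst.trans htn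
  set E1 : ℝ := (Nat.factorial n : ℝ) * (∑ a, (f a) ^ 2) / n with hE1
  set E2 : ℝ := (Nat.factorial n : ℝ) * ((∑ a, f a) ^ 2 - ∑ a, (f a) ^ 2)
      / ((n : ℝ) * ((n : ℝ) - 1)) with hE2
  have hoff : ∑ a, ∑ b, (if a ≠ b then f a * f b else 0)
      = (∑ a, f a) ^ 2 - ∑ a, (f a) ^ 2 := by
    have hpt : ∀ a b : Fin n, (if a ≠ b then f a * f b else 0)
        = f a * f b - (if a = b then f a * f b else 0) := by
      intro a b; by_cases hab : a = b <;> simp [hab]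
    simp only [hpt, Finset.sum_sub_distrib]
    have h1 : ∑ a : Fin n, ∑ b : Fin n, f a * f b = (∑ a, f a) ^ 2 := by
      rw [← Finset.sum_mul_sum]
      ring
    have h2 : ∑ a : Fin n, ∑ b : Fin n, (if a = b then f a * f b else 0)
        = ∑ a, (f a) ^ 2 := by
      refine Finset.sum_congr rfl fun a _ => ?_
      rw [Finset.sum_ite_eq]
      simp [pow_two]
    rw [h1, h2]
  have hpair : ∀ i j : Fin n, (∑ π : Equiv.Perm (Fin n), f (π i) * f (π j))
      = if i = j then E1 else E2 := by
    intro i j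
    by_cases h : i = j
    · subst h
      rw [if_pos rfl, hE1]
      have hps := sum_perm_single (fun a => f a * f a) i
      calc ∑ π : Equiv.Perm (Fin n), f (π i) * f (π i)
          = (Nat.factorial n : ℝ) * (∑ a, f a * f a) / n := hps
        _ = (Nat.factorial n : ℝ) * (∑ a, (f a) ^ 2) / n := by
            rw [Finset.sum_congr rfl fun a _ => (pow_two (f a)).symm]
    · rw [if_neg h, sum_perm_pair (fun a b => f a * f b) h]
      rw [hoff, hE2]
  have hsum : ∑ π : Equiv.Perm (Fin n),
      ((∑ i : Fin n, if (i : ℕ) < s then f (π i) else 0)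
        * (∑ j : Fin n, if (j : ℕ) < t then f (π j) else 0))
      = (s : ℝ) * ((t : ℝ) * E2) + (s : ℝ) * (E1 - E2) := by
    have hprod : ∀ π : Equiv.Perm (Fin n),
        (∑ i : Fin n, if (i : ℕ) < s then f (π i) else 0)
          * (∑ j : Fin n, if (j : ℕ) < t then f (π j) else 0)
        = ∑ i : Fin n, ∑ j : Fin n,
            (if (i : ℕ) < s ∧ (j : ℕ) < t then f (π i) * f (π j) else 0) := by
      intro π
      rw [Finset.sum_mul_sum]
      exact Finset.sum_congr rfl fun i _ => Finset.sum_congr rfl fun j _ =>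
        ite_zero_mul_ite_zero _ _ _ _
    rw [Finset.sum_congr rfl fun π _ => hprod π]
    have e1 : (∑ π : Equiv.Perm (Fin n), ∑ i : Fin n, ∑ j : Fin n,
          (if (i : ℕ) < s ∧ (j : ℕ) < t then f (π i) * f (π j) else 0))
        = ∑ i : Fin n, ∑ π : Equiv.Perm (Fin n), ∑ j : Fin n,
          (if (i : ℕ) < s ∧ (j : ℕ) < t then f (π i) * f (π j) else 0) := Finset.sum_comm
    rw [e1]
    have e2 : ∀ i : Fin n, (∑ π : Equiv.Perm (Fin n), ∑ j : Fin n,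
          (if (i : ℕ) < s ∧ (j : ℕ) < t then f (π i) * f (π j) else 0))
        = ∑ j : Fin n, ∑ π : Equiv.Perm (Fin n),
          (if (i : ℕ) < s ∧ (j : ℕ) < t then f (π i) * f (π j) else 0) :=
      fun i => Finset.sum_comm
    rw [Finset.sum_congr rfl fun i _ => e2 i]
    have e3 : ∀ i j : Fin n, (∑ π : Equiv.Perm (Fin n),
          (if (i : ℕ) < s ∧ (j : ℕ) < t then f (π i) * f (π j) else 0))
        = if (i : ℕ) < s ∧ (j : ℕ) < t then (if i = j then E1 else E2) else 0 := by
      intro i j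
      rw [sum_if_const]
      by_cases h : (i : ℕ) < s ∧ (j : ℕ) < t
      · rw [if_pos h, if_pos h, hpair i j]
      · rw [if_neg h, if_neg h]
    rw [Finset.sum_congr rfl fun i _ => Finset.sum_congr rfl fun j _ => e3 i j]
    have hpt : ∀ i j : Fin n,
        (if (i : ℕ) < s ∧ (j : ℕ) < t then (if i = j then E1 else E2) else 0)
        = (if (i : ℕ) < s then (if (j : ℕ) < t then E2 else 0) else 0)
          + (if i = j then (if (i : ℕ) < s then E1 - E2 else 0) else 0) := by
      intro i j
      by_cases hij : i = j
      · subst hij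
        simp only [if_pos rfl]
        split_ifs <;> first | ring1 | (exfalso; omega)
      · simp only [if_neg hij, add_zero]
        split_ifs <;> first | ring1 | (exfalso; omega)
    rw [Finset.sum_congr rfl fun i _ => Finset.sum_congr rfl fun j _ => hpt i j]
    simp only [Finset.sum_add_distrib]
    have hfirst : ∑ i : Fin n, ∑ j : Fin n,
        (if (i : ℕ) < s then (if (j : ℕ) < t then E2 else 0) else 0)
        = (s : ℝ) * ((t : ℝ) * E2) := by
      have : ∀ i : Fin n, ∑ j : Fin n, (if (i : ℕ) < s then (if (j : ℕ) < t then E2 else 0) else 0)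
          = if (i : ℕ) < s then (t : ℝ) * E2 else 0 := by
        intro i
        rw [sum_if_const]
        split_ifs
        · exact count_lt htn _
        · rfl
      rw [Finset.sum_congr rfl fun i _ => this i]
      exact count_lt hsn _
    have hsecond : ∑ i : Fin n, ∑ j : Fin n,
        (if i = j then (if (i : ℕ) < s then E1 - E2 else 0) else 0)
        = (s : ℝ) * (E1 - E2) := by
      have : ∀ i : Fin n, ∑ j : Fin n, (if i = j then (if (i : ℕ) < s then E1 - E2 else 0) else 0)
          = if (i : ℕ) < s then E1 - E2 else 0 := by
        intro i
        rw [Finset.sum_ite_eq]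
        simp
      rw [Finset.sum_congr rfl fun i _ => this i]
      exact count_lt hsn _
    rw [hfirst, hsecond]
  rw [pexp, hsum, hE1, hE2]
  field_simp
  ring

lemma udiff_cov (hn : 2 ≤ n) (R : Fin n → Fin n → ℝ)
    (hsym : ∀ i j, R i j = R j i) {s t : ℕ} (hst : s ≤ t) (htn : t ≤ n) :
    pcov n (fun π => Udiff n R π 0 s) (fun π => Udiff n R π 0 t)
      = (s : ℝ) * ((n : ℝ) - (t : ℝ)) *
        (4 * ((n : ℝ) * (∑ a, (∑ b, R a b) ^ 2) - (∑ a, ∑ b, R a b) ^ 2)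
          / ((n : ℝ) ^ 2 * ((n : ℝ) - 1))) := by
  have hn0 : (n : ℝ) ≠ 0 := by positivity
  have hn1 : (n : ℝ) - 1 ≠ 0 := by
    have : (2 : ℝ) ≤ n := by exact_mod_cast hn
    intro h; linarith
  have hsn : s ≤ n := hst.trans htn
  have hfs : (fun π : Equiv.Perm (Fin n) => Udiff n R π 0 s)
      = fun π => 2 * (∑ i : Fin n, if (i : ℕ) < s then (∑ b, R (π i) b) else 0)
        - ∑ a, ∑ b, R a b := funext fun π => udiff_eq R hsym π s
  have hft : (fun π : Equiv.Perm (Fin n) => Udiff n R π 0 t)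
      = fun π => 2 * (∑ i : Fin n, if (i : ℕ) < t then (∑ b, R (π i) b) else 0)
        - ∑ a, ∑ b, R a b := funext fun π => udiff_eq R hsym π t
  rw [hfs, hft, pcov_eq]
  have key1 := pexp_prod_affine (n := n) 2 (∑ a, ∑ b, R a b)
    (fun π => ∑ i : Fin n, if (i : ℕ) < s then (∑ b, R (π i) b) else 0)
    (fun π => ∑ j : Fin n, if (j : ℕ) < t then (∑ b, R (π j) b) else 0)
  rw [key1]
  have key2 := pexp_affine (n := n) 2 (∑ a, ∑ b, R a b)
    (fun π => ∑ i : Fin n, if (i : ℕ) < s then (∑ b, R (π i) b) else 0)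
  have key3 := pexp_affine (n := n) 2 (∑ a, ∑ b, R a b)
    (fun π => ∑ i : Fin n, if (i : ℕ) < t then (∑ b, R (π i) b) else 0)
  rw [key2, key3]
  have hLL := pexp_LL hn (fun a => ∑ b, R a b) hst htn
  rw [hLL]
  have hLs := pexp_L (n := n) (fun a => ∑ b, R a b) hsn (by omega)
  have hLt := pexp_L (n := n) (fun a => ∑ b, R a b) htn (by omega)
  rw [hLs, hLt]
  field_simp
  ring

end Aux

section MainProof

theorem main_le_aux (R : (n : ℕ) → Fin n → Fin n → ℝ)
    (hsym : ∀ n (i j : Fin n), R n i j = R n j i)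
    (u v : ℝ) (hu : u ∈ Set.Ioo (0 : ℝ) 1) (hv : v ∈ Set.Ioo (0 : ℝ) 1) (huv : u ≤ v)
    (hvar : ∀ᶠ n in atTop,
      0 < pvar n (fun π => Udiff n (R n) π 0 ⌊(n : ℝ) * u⌋₊)
        ∧ 0 < pvar n (fun π => Udiff n (R n) π 0 ⌊(n : ℝ) * v⌋₊)) :
    Tendsto
      (fun n =>
        pcov n (fun π => Zdiff n (R n) π 0 ⌊(n : ℝ) * u⌋₊)
          (fun π => Zdiff n (R n) π 0 ⌊(n : ℝ) * v⌋₊))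
      atTop (𝓝 (rhoDiff u v)) := by
  obtain ⟨hu0, hu1⟩ := hu
  obtain ⟨hv0, hv1⟩ := hv
  have hs : Tendsto (fun n : ℕ => (⌊(n : ℝ) * u⌋₊ : ℝ) / (n : ℝ)) atTop (𝓝 u) := by
    have h := (tendsto_nat_floor_mul_div_atTop hu0.le).comp tendsto_natCast_atTop_atTop
    have h2 : (fun x : ℕ => (⌊u * (x : ℝ)⌋₊ : ℝ) / (x : ℝ))
        = fun n : ℕ => (⌊(n : ℝ) * u⌋₊ : ℝ) / (n : ℝ) := by
      funext n; rw [mul_comm]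
    rw [← h2]; exact h
  have ht : Tendsto (fun n : ℕ => (⌊(n : ℝ) * v⌋₊ : ℝ) / (n : ℝ)) atTop (𝓝 v) := by
    have h := (tendsto_nat_floor_mul_div_atTop hv0.le).comp tendsto_natCast_atTop_atTop
    have h2 : (fun x : ℕ => (⌊v * (x : ℝ)⌋₊ : ℝ) / (x : ℝ))
        = fun n : ℕ => (⌊(n : ℝ) * v⌋₊ : ℝ) / (n : ℝ) := by
      funext n; rw [mul_comm]
    rw [← h2]; exact h
  have hA : Tendsto (fun n : ℕ => (⌊(n : ℝ) * u⌋₊ : ℝ) / (n : ℝ)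
      * (1 - (⌊(n : ℝ) * v⌋₊ : ℝ) / (n : ℝ))) atTop (𝓝 (u * (1 - v))) :=
    hs.mul (tendsto_const_nhds.sub ht)
  have hBin : Tendsto (fun n : ℕ =>
      (⌊(n : ℝ) * u⌋₊ : ℝ) / (n : ℝ) * (1 - (⌊(n : ℝ) * u⌋₊ : ℝ) / (n : ℝ))
        * ((⌊(n : ℝ) * v⌋₊ : ℝ) / (n : ℝ) * (1 - (⌊(n : ℝ) * v⌋₊ : ℝ) / (n : ℝ))))
      atTop (𝓝 (u * (1 - u) * (v * (1 - v)))) :=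
    (hs.mul (tendsto_const_nhds.sub hs)).mul (ht.mul (tendsto_const_nhds.sub ht))
  have hB : Tendsto (fun n : ℕ => Real.sqrt
      ((⌊(n : ℝ) * u⌋₊ : ℝ) / (n : ℝ) * (1 - (⌊(n : ℝ) * u⌋₊ : ℝ) / (n : ℝ))
        * ((⌊(n : ℝ) * v⌋₊ : ℝ) / (n : ℝ) * (1 - (⌊(n : ℝ) * v⌋₊ : ℝ) / (n : ℝ)))))
      atTop (𝓝 (Real.sqrt (u * (1 - u) * (v * (1 - v))))) :=
    (Real.continuous_sqrt.tendsto _).comp hBin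
  have hLpos : 0 < u * (1 - u) * (v * (1 - v)) :=
    mul_pos (mul_pos hu0 (by linarith)) (mul_pos hv0 (by linarith))
  have hsqpos : 0 < Real.sqrt (u * (1 - u) * (v * (1 - v))) := Real.sqrt_pos.2 hLpos
  have hlim := hA.div hB hsqpos.ne'
  have hrho : rhoDiff u v = u * (1 - v) / Real.sqrt (u * (1 - u) * (v * (1 - v))) := by
    unfold rhoDiff
    rw [min_eq_left huv, max_eq_right huv]
  rw [hrho]
  refine Tendsto.congr' ?_ hlim
  have hnu1 : ∀ᶠ n : ℕ in atTop, (1 : ℝ) ≤ (n : ℝ) * u := by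
    have hmt : Tendsto (fun n : ℕ => (n : ℝ) * u) atTop atTop :=
      Tendsto.atTop_mul_const hu0 tendsto_natCast_atTop_atTop
    exact hmt.eventually_ge_atTop 1
  filter_upwards [hvar, hnu1, eventually_ge_atTop 2] with n hV hnu hn2
  simp only [Pi.div_apply]
  set s := ⌊(n : ℝ) * u⌋₊ with hsdef
  set t := ⌊(n : ℝ) * v⌋₊ with htdef
  have hnpos : (0 : ℝ) < (n : ℝ) := by
    have : (2 : ℝ) ≤ (n : ℝ) := by exact_mod_cast hn2
    linarith
  have hs1 : 1 ≤ s := Nat.le_floor (by exact_mod_cast hnu)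
  have hstn : s ≤ t :=
    Nat.floor_le_floor (mul_le_mul_of_nonneg_left huv hnpos.le)
  have htlt : t < n := by
    rw [htdef]
    rw [Nat.floor_lt (by positivity)]
    nlinarith
  have htn : t ≤ n := htlt.le
  have hsr1 : (1 : ℝ) ≤ (s : ℝ) := by exact_mod_cast hs1
  have hstr : (s : ℝ) ≤ (t : ℝ) := by exact_mod_cast hstn
  have htr : (t : ℝ) < (n : ℝ) := by exact_mod_cast htlt
  set Q : ℝ := 4 * ((n : ℝ) * (∑ a, (∑ b, R n a b) ^ 2) - (∑ a, ∑ b, R n a b) ^ 2)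
      / ((n : ℝ) ^ 2 * ((n : ℝ) - 1)) with hQdef
  have hcov : pcov n (fun π => Udiff n (R n) π 0 s) (fun π => Udiff n (R n) π 0 t)
      = (s : ℝ) * ((n : ℝ) - (t : ℝ)) * Q := udiff_cov hn2 (R n) (hsym n) hstn htn
  have hvs : pvar n (fun π => Udiff n (R n) π 0 s)
      = (s : ℝ) * ((n : ℝ) - (s : ℝ)) * Q := by
    rw [pvar_eq_pcov]
    exact udiff_cov hn2 (R n) (hsym n) le_rfl (hstn.trans htn)
  have hvt : pvar n (fun π => Udiff n (R n) π 0 t)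
      = (t : ℝ) * ((n : ℝ) - (t : ℝ)) * Q := by
    rw [pvar_eq_pcov]
    exact udiff_cov hn2 (R n) (hsym n) le_rfl htn
  have ha : 0 < (s : ℝ) * ((n : ℝ) - (s : ℝ)) := by
    apply mul_pos (by linarith)
    linarith
  have hb : 0 < (t : ℝ) * ((n : ℝ) - (t : ℝ)) := by
    apply mul_pos (by linarith)
    linarith
  have hQpos : 0 < Q := by
    have h := hV.1
    rw [hvs] at h
    by_contra hq
    push_neg at hq
    nlinarith
  have hz : pcov n (fun π => Zdiff n (R n) π 0 s) (fun π => Zdiff n (R n) π 0 t)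
      = pcov n (fun π => Udiff n (R n) π 0 s) (fun π => Udiff n (R n) π 0 t)
        / (Real.sqrt (pvar n (fun π => Udiff n (R n) π 0 s))
            * Real.sqrt (pvar n (fun π => Udiff n (R n) π 0 t))) := by
    have hstd := pcov_standardize (n := n)
      (fun π => Udiff n (R n) π 0 s) (fun π => Udiff n (R n) π 0 t)
      (Real.sqrt (pvar n (fun π => Udiff n (R n) π 0 s)))
      (Real.sqrt (pvar n (fun π => Udiff n (R n) π 0 t)))
    simp only [Zdiff]
    exact hstd
  rw [hz, hcov, hvs, hvt]
  have hrhs : (s : ℝ) * ((n : ℝ) - (t : ℝ)) * Q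
      / (Real.sqrt ((s : ℝ) * ((n : ℝ) - (s : ℝ)) * Q)
        * Real.sqrt ((t : ℝ) * ((n : ℝ) - (t : ℝ)) * Q))
      = (s : ℝ) * ((n : ℝ) - (t : ℝ))
        / (Real.sqrt ((s : ℝ) * ((n : ℝ) - (s : ℝ)))
          * Real.sqrt ((t : ℝ) * ((n : ℝ) - (t : ℝ)))) := by
    rw [Real.sqrt_mul ha.le, Real.sqrt_mul hb.le]
    have hd : Real.sqrt ((s : ℝ) * ((n : ℝ) - (s : ℝ))) * Real.sqrt Q
        * (Real.sqrt ((t : ℝ) * ((n : ℝ) - (t : ℝ))) * Real.sqrt Q)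
        = Real.sqrt ((s : ℝ) * ((n : ℝ) - (s : ℝ)))
          * Real.sqrt ((t : ℝ) * ((n : ℝ) - (t : ℝ))) * Q := by
      calc Real.sqrt ((s : ℝ) * ((n : ℝ) - (s : ℝ))) * Real.sqrt Q
          * (Real.sqrt ((t : ℝ) * ((n : ℝ) - (t : ℝ))) * Real.sqrt Q)
          = Real.sqrt ((s : ℝ) * ((n : ℝ) - (s : ℝ)))
            * Real.sqrt ((t : ℝ) * ((n : ℝ) - (t : ℝ))) * (Real.sqrt Q * Real.sqrt Q) := by
            ring
        _ = Real.sqrt ((s : ℝ) * ((n : ℝ) - (s : ℝ)))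
            * Real.sqrt ((t : ℝ) * ((n : ℝ) - (t : ℝ))) * Q := by
            rw [Real.mul_self_sqrt hQpos.le]
    rw [hd, mul_div_mul_right _ _ hQpos.ne']
  rw [hrhs]
  have hsqa : Real.sqrt ((s : ℝ) * ((n : ℝ) - (s : ℝ))) ≠ 0 := (Real.sqrt_pos.2 ha).ne'
  have hsqb : Real.sqrt ((t : ℝ) * ((n : ℝ) - (t : ℝ))) ≠ 0 := (Real.sqrt_pos.2 hb).ne'
  have e1 : (s : ℝ) / (n : ℝ) * (1 - (s : ℝ) / (n : ℝ))
      * ((t : ℝ) / (n : ℝ) * (1 - (t : ℝ) / (n : ℝ)))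
      = ((s : ℝ) * ((n : ℝ) - (s : ℝ))) * ((t : ℝ) * ((n : ℝ) - (t : ℝ)))
        / ((n : ℝ) ^ 2) ^ 2 := by
    field_simp
  have e2 : (s : ℝ) / (n : ℝ) * (1 - (t : ℝ) / (n : ℝ))
      = (s : ℝ) * ((n : ℝ) - (t : ℝ)) / (n : ℝ) ^ 2 := by
    rw [eq_div_iff (by positivity : ((n : ℝ) ^ 2) ≠ 0)]
    field_simp
  rw [e1, e2, Real.sqrt_div (by positivity) (((n : ℝ) ^ 2) ^ 2),
    Real.sqrt_sq (by positivity), Real.sqrt_mul ha.le]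
  rw [div_div_div_comm, div_self (by positivity : ((n : ℝ) ^ 2) ≠ 0), div_one]

end MainProof


/-- Under Conditions (C1)–(C6), for all fixed `u, v ∈ (0,1)`, the covariance of
`Z_diff^π(⌊n·u⌋)` and `Z_diff^π(⌊n·v⌋)` under the permutation null converges to
`ρ_diff*(u,v) = (u∧v)(1−(u∨v))/√((u∧v)(1−(u∧v))·(u∨v)(1−(u∨v)))`. -/
theorem stmt14 (R : (n : ℕ) → Fin n → Fin n → ℝ)
    (hsym : ∀ n (i j : Fin n), R n i j = R n j i) (hdiag : ∀ n (i : Fin n), R n i i = 0)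
    (hC1 : Cond1 R) (hC2 : Cond2 R) (hC3 : Cond3 R) (hC4 : Cond4 R)
    (hC5 : Cond5 R) (hC6 : Cond6 R)
    (u v : ℝ) (hu : u ∈ Set.Ioo (0 : ℝ) 1) (hv : v ∈ Set.Ioo (0 : ℝ) 1)
    (hvar : ∀ᶠ n in atTop,
      (0 < pvar n (fun π => Uw n (R n) π 0 ⌊(n : ℝ) * u⌋₊)
        ∧ 0 < pvar n (fun π => Udiff n (R n) π 0 ⌊(n : ℝ) * u⌋₊))
      ∧ (0 < pvar n (fun π => Uw n (R n) π 0 ⌊(n : ℝ) * v⌋₊)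
        ∧ 0 < pvar n (fun π => Udiff n (R n) π 0 ⌊(n : ℝ) * v⌋₊))) :
    Tendsto
      (fun n =>
        pcov n (fun π => Zdiff n (R n) π 0 ⌊(n : ℝ) * u⌋₊)
          (fun π => Zdiff n (R n) π 0 ⌊(n : ℝ) * v⌋₊))
      atTop (𝓝 (rhoDiff u v)) := by
  rcases le_total u v with h | h
  · exact main_le_aux R hsym u v hu hv h (hvar.mono fun n hn => ⟨hn.1.2, hn.2.2⟩)
  · have key := main_le_aux R hsym v u hv hu h (hvar.mono fun n hn => ⟨hn.2.2, hn.1.2⟩)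
    have hfun : (fun n => pcov n (fun π => Zdiff n (R n) π 0 ⌊(n : ℝ) * u⌋₊)
          (fun π => Zdiff n (R n) π 0 ⌊(n : ℝ) * v⌋₊))
        = fun n => pcov n (fun π => Zdiff n (R n) π 0 ⌊(n : ℝ) * v⌋₊)
          (fun π => Zdiff n (R n) π 0 ⌊(n : ℝ) * u⌋₊) :=
      funext fun n => pcov_comm _ _
    have hrho : rhoDiff u v = rhoDiff v u := by
      unfold rhoDiff
      rw [min_comm, max_comm]
    rw [hfun, hrho]
    exact key
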